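/- Let t = (t_1, …, t_m) ∈ [0,1]^m with order statistics t^{(1)} ≤ ⋯ ≤ t^{(m)}, and let Q' : [0,1] → [0,1] be defined by Q'(u) = (∑_{j=1}^m 1{t_j ≥ u}(1 − t_j))/(∑_{j=1}^m 1{t_j ≥ u}) for u ∈ [0, t^{(m)}] and Q'(u) = 0 for u ∈ (t^{(m)}, 1]. Then: (1) Q' is constant on [0, t^{(1)}], on each interval (t^{(m−r)}, t^{(m−r+1)}] for r = 1, …, m−1, and on (t^{(m)}, 1]; (2) Q' is left-continuous on (0,1); (3) Q' is non-increasing on [0,1]. -/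

import Mathlib

open MeasureTheory Filter

/-- Order statistics of a finite tuple: the `i`-th smallest value (0-indexed). -/
noncomputable def ordStat {m : ℕ} (t : Fin m → ℝ) : Fin m → ℝ :=
  t ∘ Tuple.sort t

/-- Cumulative average of the `q` smallest values, `(1/q) * ∑_{l=1}^q t^{(l)}`. -/
noncomputable def cumAvgLow {m : ℕ} (t : Fin m → ℝ) (q : ℕ) : ℝ :=
  (∑ i : Fin m, if (i : ℕ) < q then ordStat t i else 0) / q

/-- Cumulative average of `1 - (value)` over the `q` largest values,
`(1/q) * ∑_{l=1}^q (1 - t^{(m-l+1)})`. -/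
noncomputable def cumAvgHigh {m : ℕ} (t : Fin m → ℝ) (q : ℕ) : ℝ :=
  (∑ i : Fin m, if m - q ≤ (i : ℕ) then 1 - ordStat t i else 0) / q

/-- `r(t, α) = max {q ∈ {1,…,m} : (1/q) ∑_{l=1}^q t^{(l)} ≤ α}`, `0` if no such `q`. -/
noncomputable def rIdx {m : ℕ} (t : Fin m → ℝ) (α : ℝ) : ℕ :=
  sSup {q : ℕ | 1 ≤ q ∧ q ≤ m ∧ cumAvgLow t q ≤ α}

/-- `a(t, β) = max {q ∈ {1,…,m} : (1/q) ∑_{l=1}^q (1 - t^{(m-l+1)}) ≤ β}`, `0` if no such `q`. -/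
noncomputable def aIdx {m : ℕ} (t : Fin m → ℝ) (β : ℝ) : ℕ :=
  sSup {q : ℕ | 1 ≤ q ∧ q ≤ m ∧ cumAvgHigh t q ≤ β}

/-- Adaptive lower cutoff `t^l`: `t^{(r+1)}` if `r < m`, and `1` if `r = m`. -/
noncomputable def lowerCut {m : ℕ} (t : Fin m → ℝ) (α : ℝ) : ℝ :=
  if h : rIdx t α < m then ordStat t ⟨rIdx t α, h⟩ else 1

/-- Adaptive upper cutoff `t^u`: `t^{(m-a)}` if `a < m`, and `0` if `a = m`. -/
noncomputable def upperCut {m : ℕ} (t : Fin m → ℝ) (β : ℝ) : ℝ :=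
  if h : aIdx t β < m then ordStat t ⟨m - 1 - aIdx t β, by omega⟩ else 0

/-- The `k`-th order statistic with 1-based index `k` (junk value `1` out of range). -/
noncomputable def ordStatN {m : ℕ} (t : Fin m → ℝ) (k : ℕ) : ℝ :=
  if h : k - 1 < m then ordStat t ⟨k - 1, h⟩ else 1

/-- Empirical running-average functional `Q(u)` (equal to `0` below `t^{(1)}`,
using the convention `0/0 = 0`). -/
noncomputable def Qlow {m : ℕ} (t : Fin m → ℝ) (u : ℝ) : ℝ :=
  (∑ j : Fin m, if t j ≤ u then t j else 0) / (∑ j : Fin m, if t j ≤ u then (1:ℝ) else 0)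

/-- Empirical running-average functional `Q'(u)` (equal to `0` above `t^{(m)}`,
using the convention `0/0 = 0`). -/
noncomputable def Qhigh {m : ℕ} (t : Fin m → ℝ) (u : ℝ) : ℝ :=
  (∑ j : Fin m, if u ≤ t j then 1 - t j else 0) / (∑ j : Fin m, if u ≤ t j then (1:ℝ) else 0)

open Topology
section Aux
variable {m : ℕ}

lemma qhigh_congr (t : Fin m → ℝ) {u v : ℝ}
    (h : ∀ j, u ≤ t j ↔ v ≤ t j) : Qhigh t u = Qhigh t v := by
  unfold Qhigh
  congr 1 <;> exact Finset.sum_congr rfl (fun j _ => by simp [h j])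

lemma ordStat_surj (t : Fin m → ℝ) (j : Fin m) :
    ∃ k : Fin m, t j = ordStat t k := by
  refine ⟨(Tuple.sort t)⁻¹ j, ?_⟩
  simp [ordStat]

lemma qhigh_mono (t : Fin m → ℝ) (ht : ∀ i, t i ∈ Set.Icc (0:ℝ) 1)
    {u v : ℝ} (huv : u ≤ v) (hv : v ≤ 1) : Qhigh t v ≤ Qhigh t u := by
  set Sv : ℝ := ∑ j : Fin m, if v ≤ t j then 1 - t j else 0 with hSv
  set Nv : ℝ := ∑ j : Fin m, if v ≤ t j then (1:ℝ) else 0 with hNv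
  set sB : ℝ := ∑ j : Fin m, if u ≤ t j ∧ t j < v then 1 - t j else 0 with hsB
  set nB : ℝ := ∑ j : Fin m, if u ≤ t j ∧ t j < v then (1:ℝ) else 0 with hnB
  have hsplitS : (∑ j : Fin m, if u ≤ t j then 1 - t j else 0) = Sv + sB := by
    rw [hSv, hsB, ← Finset.sum_add_distrib]
    refine Finset.sum_congr rfl (fun j _ => ?_)
    by_cases h1 : v ≤ t j
    · have h2 : u ≤ t j := huv.trans h1
      simp [h1, h2, not_lt.2 h1]
    · by_cases h2 : u ≤ t j
      · simp [h1, h2, lt_of_not_ge h1]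
      · simp [h1, h2]
  have hsplitN : (∑ j : Fin m, if u ≤ t j then (1:ℝ) else 0) = Nv + nB := by
    rw [hNv, hnB, ← Finset.sum_add_distrib]
    refine Finset.sum_congr rfl (fun j _ => ?_)
    by_cases h1 : v ≤ t j
    · have h2 : u ≤ t j := huv.trans h1
      simp [h1, h2, not_lt.2 h1]
    · by_cases h2 : u ≤ t j
      · simp [h1, h2, lt_of_not_ge h1]
      · simp [h1, h2]
  have hSv0 : 0 ≤ Sv := Finset.sum_nonneg fun j _ => by
    by_cases h1 : v ≤ t j <;> simp [h1, (ht j).2]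
  have hsB0 : 0 ≤ sB := Finset.sum_nonneg fun j _ => by
    by_cases h1 : u ≤ t j ∧ t j < v <;> simp [h1]
    linarith [(ht j).2]
  have hNv0 : 0 ≤ Nv := Finset.sum_nonneg fun j _ => by positivity
  have hnB0 : 0 ≤ nB := Finset.sum_nonneg fun j _ => by positivity
  have h1 : Sv ≤ (1 - v) * Nv := by
    rw [hSv, hNv, Finset.mul_sum]
    refine Finset.sum_le_sum fun j _ => ?_
    by_cases h1 : v ≤ t j <;> simp [h1] <;> linarith
  have h2 : (1 - v) * nB ≤ sB := by
    rw [hsB, hnB, Finset.mul_sum]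
    refine Finset.sum_le_sum fun j _ => ?_
    by_cases h1 : u ≤ t j ∧ t j < v <;> simp [h1] <;> linarith [h1.2]
  unfold Qhigh
  rw [hsplitS, hsplitN, ← hSv, ← hNv]
  rcases eq_or_lt_of_le hNv0 with h0 | h0
  · rw [← h0, div_zero]
    exact div_nonneg (by linarith) (by linarith)
  · rw [div_le_div_iff₀ h0 (by linarith)]
    nlinarith [mul_le_mul_of_nonneg_right h1 hnB0, mul_le_mul_of_nonneg_right h2 hNv0]

end Aux

/-- **Lemma 10.** Properties of the empirical running-average functional `Q'`:
(1) `Q'` is constant on `[0, t^{(1)}]`, on each `(t^{(m−r)}, t^{(m−r+1)}]` and on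
`(t^{(m)}, 1]`; (2) `Q'` is left-continuous on `(0,1)`; (3) `Q'` is non-increasing
on `[0,1]`. -/
theorem stmt_10 {m : ℕ} (hm : 1 ≤ m) (t : Fin m → ℝ)
    (ht : ∀ i, t i ∈ Set.Icc (0:ℝ) 1) :
    ((∀ u v : ℝ, 0 ≤ u → u ≤ v → v ≤ ordStat t ⟨0, by omega⟩ → Qhigh t u = Qhigh t v) ∧
     (∀ r : ℕ, ∀ _hr1 : 1 ≤ r, ∀ _hr2 : r ≤ m - 1, ∀ u v : ℝ,
        ordStat t ⟨m - r - 1, by omega⟩ < u → u ≤ v → v ≤ ordStat t ⟨m - r, by omega⟩ →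
        Qhigh t u = Qhigh t v) ∧
     (∀ u v : ℝ, ordStat t ⟨m - 1, by omega⟩ < u → u ≤ v → v ≤ 1 →
        Qhigh t u = Qhigh t v)) ∧
    (∀ u ∈ Set.Ioo (0:ℝ) 1, ContinuousWithinAt (Qhigh t) (Set.Iic u) u) ∧
    AntitoneOn (Qhigh t) (Set.Icc (0:ℝ) 1) := by
  refine ⟨⟨?_, ?_, ?_⟩, ?_, ?_⟩
  · -- constant on [0, t^{(1)}]
    intro u v hu huv hv
    refine qhigh_congr t fun j => ?_
    obtain ⟨k, hk⟩ := ordStat_surj t j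
    have hmono : ordStat t ⟨0, by omega⟩ ≤ t j := by
      rw [hk]; exact Tuple.monotone_sort t (by simp [Fin.le_def])
    constructor <;> intro _ <;> linarith
  · -- constant on middle intervals
    intro r hr1 hr2 u v hu huv hv
    refine qhigh_congr t fun j => ?_
    obtain ⟨k, hk⟩ := ordStat_surj t j
    rcases le_or_gt (k : ℕ) (m - r - 1) with hle | hlt
    · have : t j ≤ ordStat t ⟨m - r - 1, by omega⟩ := by
        rw [hk]; exact Tuple.monotone_sort t (by simp [Fin.le_def]; omega)
      constructor <;> intro h <;> linarith
    · have : ordStat t ⟨m - r, by omega⟩ ≤ t j := by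
        rw [hk]
        refine Tuple.monotone_sort t ?_
        simp [Fin.le_def]; omega
      constructor <;> intro _ <;> linarith
  · -- constant on (t^{(m)}, 1]
    intro u v hu huv hv
    refine qhigh_congr t fun j => ?_
    obtain ⟨k, hk⟩ := ordStat_surj t j
    have : t j ≤ ordStat t ⟨m - 1, by omega⟩ := by
      rw [hk]
      refine Tuple.monotone_sort t ?_
      simp [Fin.le_def]; omega
    constructor <;> intro h <;> linarith
  · -- left-continuity
    intro u hu
    have hconst : ∃ c : ℝ, c < u ∧ ∀ w ∈ Set.Ioc c u, Qhigh t w = Qhigh t u := by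
      set F := Finset.univ.filter (fun j => t j < u) with hF
      rcases F.eq_empty_or_nonempty with hFe | hFn
      · refine ⟨u - 1, by linarith, fun w hw => ?_⟩
        refine qhigh_congr t fun j => ?_
        have hj : u ≤ t j := by
          by_contra h
          have : j ∈ F := by simp [hF, lt_of_not_ge h]
          simp [hFe] at this
        constructor <;> intro _ <;> [exact hj; linarith [hw.2.trans hj]]
      · refine ⟨F.sup' hFn t, ?_, fun w hw => ?_⟩
        · rw [Finset.sup'_lt_iff]
          intro j hj
          exact (Finset.mem_filter.1 hj).2
        · refine qhigh_congr t fun j => ?_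
          constructor <;> intro h
          · by_contra h2
            have hjF : j ∈ F := by simp [hF, lt_of_not_ge h2]
            have := Finset.le_sup' t hjF
            linarith [hw.1]
          · linarith [hw.2]
    obtain ⟨c, hc, hcw⟩ := hconst
    have hmem : Set.Ioc c u ∈ 𝓝[Set.Iic u] u := Ioc_mem_nhdsLE hc
    have heq : (fun _ : ℝ => Qhigh t u) =ᶠ[𝓝[Set.Iic u] u] Qhigh t :=
      Filter.eventually_of_mem hmem fun w hw => (hcw w hw).symm
    exact (tendsto_const_nhds : Filter.Tendsto (fun _ : ℝ => Qhigh t u)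
      (𝓝[Set.Iic u] u) (𝓝 (Qhigh t u))).congr' heq
  · -- antitone
    intro u hu v hv huv
    exact qhigh_mono t ht huv hv.2
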